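/- Let n, m be integers with n ≡ m (mod 2), and let φ : ℂ → ℂ be entire (holomorphic on all of ℂ). Then the following are equivalent: (i) φ(−λ) · q_{n,m}(λ) = φ(λ) · q_{n,m}(−λ) for all λ ∈ ℂ, and φ(λ₀) = 0 for every λ₀ ∈ ℂ with q_{n,m}(λ₀) = 0; (ii) there exists an entire function h : ℂ → ℂ with h(λ) = h(−λ) for all λ ∈ ℂ such that φ(λ) = h(λ) · q_{n,m}(λ) for all λ ∈ ℂ. (This is Theorem 'Intertwining conditions in Level 3' for SL(2,ℝ) in concrete form: condition (i) is the translation of Delorme's intertwining condition (D.3) into the Knapp–Stein functional equation together with vanishing at the zeros of q_{n,m}.) -/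

import Mathlib

open Finset in
/-- The polynomial `q_{n,m}` (Definition of `q_{n,m}` for `SL(2,ℝ)`), for integers
`n ≡ m (mod 2)`.  Here `0` is regarded as having the same sign as any integer, which is
encoded by the condition `0 ≤ n * m`. -/
noncomputable def qPoly (n m : ℤ) (z : ℂ) : ℂ :=
  if n = m then 1
  else if 0 ≤ n * m then
    if m.natAbs < n.natAbs then
      ∏ j ∈ range ((n.natAbs - m.natAbs) / 2), (z + (((m.natAbs : ℂ) + 1) / 2 + (j : ℂ)))
    else
      ∏ j ∈ range ((m.natAbs - n.natAbs) / 2), (z - (((n.natAbs : ℂ) + 1) / 2 + (j : ℂ)))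
  else
    ∏ j ∈ range ((n.natAbs + m.natAbs) / 2), (z + (((n.natAbs : ℂ) - 1) / 2 - (j : ℂ)))

open Finset

/-- Factor a single simple zero out of an entire function. -/
lemma factor_one {φ : ℂ → ℂ} (hφ : Differentiable ℂ φ) (a : ℂ) (ha : φ a = 0) :
    ∃ ψ : ℂ → ℂ, Differentiable ℂ ψ ∧ ∀ z, φ z = ψ z * (z - a) := by
  refine ⟨dslope φ a, ?_, ?_⟩
  · intro z
    rcases eq_or_ne z a with rfl | hz
    · obtain ⟨p, hp⟩ := hφ.analyticAt z
      exact hp.has_fpower_series_dslope_fslope.analyticAt.differentiableAt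
    · exact (differentiableAt_dslope_of_ne hz).mpr (hφ z)
  · intro z
    have h := sub_smul_dslope φ a z
    rw [ha, sub_zero, smul_eq_mul] at h
    rw [← h]; ring

/-- Factor finitely many distinct simple zeros out of an entire function. -/
lemma factor_many (k : ℕ) (c : ℕ → ℂ)
    (hc : ∀ i j, i < k → j < k → c i = c j → i = j)
    (φ : ℂ → ℂ) (hφ : Differentiable ℂ φ) (hz : ∀ j, j < k → φ (c j) = 0) :
    ∃ ψ : ℂ → ℂ, Differentiable ℂ ψ ∧ ∀ z, φ z = ψ z * ∏ j ∈ range k, (z - c j) := by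
  induction k generalizing φ with
  | zero => exact ⟨φ, hφ, fun z => by simp⟩
  | succ k ih =>
    obtain ⟨ψ₀, hψ₀, hfac⟩ := factor_one hφ (c k) (hz k (Nat.lt_succ_self k))
    have hz0 : ∀ j, j < k → ψ₀ (c j) = 0 := by
      intro j hj
      have h1 : φ (c j) = 0 := hz j (Nat.lt_succ_of_lt hj)
      have h2 := hfac (c j)
      have hne : c j - c k ≠ 0 := by
        intro hcon
        have : c j = c k := by linear_combination hcon
        exact absurd (hc j k (Nat.lt_succ_of_lt hj) (Nat.lt_succ_self k) this) hj.ne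
      rw [h1] at h2
      exact (mul_eq_zero.mp h2.symm).resolve_right hne
    obtain ⟨ψ, hψ, hfac2⟩ := ih (fun i j hi hj => hc i j (Nat.lt_succ_of_lt hi)
      (Nat.lt_succ_of_lt hj)) ψ₀ hψ₀ hz0
    refine ⟨ψ, hψ, fun z => ?_⟩
    rw [prod_range_succ, hfac z, hfac2 z]; ring

/-- The key abstract equivalence, for `q` a product of distinct real linear factors. -/
lemma master (k : ℕ) (c : ℕ → ℂ)
    (hc : ∀ i j, i < k → j < k → c i = c j → i = j)
    (him : ∀ j, j < k → (c j).im = 0)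
    (φ : ℂ → ℂ) (hφ : Differentiable ℂ φ)
    (q : ℂ → ℂ) (hq : ∀ z, q z = ∏ j ∈ range k, (z - c j)) :
    ((∀ z : ℂ, φ (-z) * q z = φ z * q (-z)) ∧
      (∀ z : ℂ, q z = 0 → φ z = 0)) ↔
    (∃ h : ℂ → ℂ, Differentiable ℂ h ∧ (∀ z : ℂ, h z = h (-z)) ∧
      ∀ z : ℂ, φ z = h z * q z) := by
  have hqdiff : Differentiable ℂ q := by
    have hqe : q = fun z => ∏ j ∈ range k, (z - c j) := funext hq
    rw [hqe]
    exact Differentiable.fun_finsetProd fun j _ => differentiable_id.sub (differentiable_const _)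
  constructor
  · rintro ⟨heq, hvan⟩
    have hroots : ∀ j, j < k → φ (c j) = 0 := by
      intro j hj
      apply hvan
      rw [hq]
      exact prod_eq_zero (mem_range.mpr hj) (by ring)
    obtain ⟨h, hh, hfac⟩ := factor_many k c hc φ hφ hroots
    have hfac' : ∀ z, φ z = h z * q z := fun z => by rw [hq]; exact hfac z
    refine ⟨h, hh, ?_, hfac'⟩
    -- show `h` is even, via the identity theorem
    set g : ℂ → ℂ := fun z => h z - h (-z) with hg
    have hgdiff : Differentiable ℂ g :=
      hh.sub (hh.comp differentiable_neg)
    have hgzero : ∀ z, g z * (q z * q (-z)) = 0 := by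
      intro z
      have h1 := heq z
      rw [hfac' z, hfac' (-z)] at h1
      simp only [hg]
      linear_combination -h1
    set Q : ℂ → ℂ := fun z => q z * q (-z) with hQ
    have hQdiff : Differentiable ℂ Q := hqdiff.mul (hqdiff.comp differentiable_neg)
    have hQi : Q Complex.I ≠ 0 := by
      have h1 : q Complex.I ≠ 0 := by
        rw [hq]
        rw [prod_ne_zero_iff]
        intro j hj hcon
        have := congrArg Complex.im hcon
        simp [him j (mem_range.mp hj)] at this
      have h2 : q (-Complex.I) ≠ 0 := by
        rw [hq]
        rw [prod_ne_zero_iff]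
        intro j hj hcon
        have := congrArg Complex.im hcon
        simp [him j (mem_range.mp hj)] at this
      simp only [hQ]
      exact mul_ne_zero h1 h2
    have hev : g =ᶠ[nhds Complex.I] 0 := by
      filter_upwards [(hQdiff.continuous.continuousAt).eventually_ne hQi] with z hz
      have := hgzero z
      exact (mul_eq_zero.mp this).resolve_right hz
    have hana : AnalyticOnNhd ℂ g Set.univ :=
      hgdiff.differentiableOn.analyticOnNhd isOpen_univ
    have := hana.eqOn_zero_of_preconnected_of_eventuallyEq_zero
      isPreconnected_univ (Set.mem_univ Complex.I) hev
    intro z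
    have hz := this (Set.mem_univ z)
    simpa [hg, sub_eq_zero] using hz
  · rintro ⟨h, hh, heven, hfac⟩
    constructor
    · intro z
      rw [hfac z, hfac (-z), ← heven z]
      ring
    · intro z hz
      rw [hfac z, hz, mul_zero]

/-- Intertwining conditions in Level 3 for `SL(2,ℝ)`: an entire function
`φ : ℂ → ℂ` satisfies the Knapp–Stein functional equation together with vanishing at the
zeros of `q_{n,m}` if and only if `φ = h · q_{n,m}` for some even entire function `h`. -/
theorem stmt_3 (n m : ℤ) (hpar : n % 2 = m % 2) (φ : ℂ → ℂ) (hφ : Differentiable ℂ φ) :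
    ((∀ z : ℂ, φ (-z) * qPoly n m z = φ z * qPoly n m (-z)) ∧
      (∀ z : ℂ, qPoly n m z = 0 → φ z = 0)) ↔
    (∃ h : ℂ → ℂ, Differentiable ℂ h ∧ (∀ z : ℂ, h z = h (-z)) ∧
      ∀ z : ℂ, φ z = h z * qPoly n m z) := by
  by_cases h1 : n = m
  · exact master 0 (fun _ => 0) (by omega) (by omega) φ hφ _
      (fun z => by simp [qPoly, h1])
  · by_cases h2 : 0 ≤ n * m
    · by_cases h3 : m.natAbs < n.natAbs
      · refine master ((n.natAbs - m.natAbs) / 2)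
          (fun j => -(((m.natAbs : ℂ) + 1) / 2 + (j : ℂ))) ?_ ?_ φ hφ _ ?_
        · intro i j _ _ hij
          have : (i : ℂ) = (j : ℂ) := by linear_combination -hij
          exact_mod_cast this
        · intro j _
          have : ((-((m.natAbs : ℝ) + 1) / 2 - (j : ℝ) : ℝ) : ℂ)
              = -(((m.natAbs : ℂ) + 1) / 2 + (j : ℂ)) := by push_cast; ring
          show (-(((m.natAbs : ℂ) + 1) / 2 + (j : ℂ))).im = 0
          rw [← this]; exact Complex.ofReal_im _
        · intro z
          simp only [qPoly, if_neg h1, if_pos h2, if_pos h3]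
          exact prod_congr rfl fun j _ => by ring
      · refine master ((m.natAbs - n.natAbs) / 2)
          (fun j => ((n.natAbs : ℂ) + 1) / 2 + (j : ℂ)) ?_ ?_ φ hφ _ ?_
        · intro i j _ _ hij
          have : (i : ℂ) = (j : ℂ) := by linear_combination hij
          exact_mod_cast this
        · intro j _
          have : (((((n.natAbs : ℝ)) + 1) / 2 + (j : ℝ) : ℝ) : ℂ)
              = ((n.natAbs : ℂ) + 1) / 2 + (j : ℂ) := by push_cast; ring
          show (((n.natAbs : ℂ) + 1) / 2 + (j : ℂ)).im = 0
          rw [← this]; exact Complex.ofReal_im _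
        · intro z
          simp only [qPoly, if_neg h1, if_pos h2, if_neg h3]
    · refine master ((n.natAbs + m.natAbs) / 2)
        (fun j => -(((n.natAbs : ℂ) - 1) / 2 - (j : ℂ))) ?_ ?_ φ hφ _ ?_
      · intro i j _ _ hij
        have : (i : ℂ) = (j : ℂ) := by linear_combination hij
        exact_mod_cast this
      · intro j _
        have : ((-(((n.natAbs : ℝ)) - 1) / 2 + (j : ℝ) : ℝ) : ℂ)
            = -(((n.natAbs : ℂ) - 1) / 2 - (j : ℂ)) := by push_cast; ring
        show (-(((n.natAbs : ℂ) - 1) / 2 - (j : ℂ))).im = 0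
        rw [← this]; exact Complex.ofReal_im _
      · intro z
        simp only [qPoly, if_neg h1, if_neg h2]
        exact prod_congr rfl fun j _ => by ring
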